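/- Let H be a complex Hilbert space, ψ ∈ H a unit vector, and U, V : Fin 2 → Fin 2 → (H →L[ℂ] H) unitary operator matrices whose entries *-commute and which satisfy the perfect embezzlement relations for ψ. Let M be the topological closure of the linear span of { ((U 0 0)†)^n ψ : n ∈ ℕ }. Then the restriction of (U 0 0)† to M is a non-unitary isometry: (U 0 0)† maps M into M; ‖(U 0 0)† m‖ = ‖m‖ for every m ∈ M; but (U 0 0)† does not map M onto M. -/

import Mathlib

open ContinuousLinearMap
open scoped InnerProductSpace

/-- A family `U : Fin 2 → Fin 2 → (H →L[ℂ] H)` is a unitary operator matrix. -/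
def IsUnitaryOpMatrix {H : Type*} [NormedAddCommGroup H] [InnerProductSpace ℂ H]
    [CompleteSpace H] {d : ℕ} (U : Fin d → Fin d → (H →L[ℂ] H)) : Prop :=
  (∀ i j, ∑ k, (adjoint (U k i)) ∘L (U k j) = if i = j then (1 : H →L[ℂ] H) else 0) ∧
  (∀ i j, ∑ k, (U i k) ∘L (adjoint (U j k)) = if i = j then (1 : H →L[ℂ] H) else 0)

/-- Two families of bounded operators *-commute entrywise. -/
def StarCommuteFamilies {H : Type*} [NormedAddCommGroup H] [InnerProductSpace ℂ H]
    [CompleteSpace H] {d : ℕ} (U V : Fin d → Fin d → (H →L[ℂ] H)) : Prop :=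
  ∀ i j k l, (U i j) ∘L (V k l) = (V k l) ∘L (U i j) ∧
    (adjoint (U i j)) ∘L (V k l) = (V k l) ∘L (adjoint (U i j))

/-- In a perfect embezzlement protocol, the restriction of `(U 0 0)†` to the closure `M` of
the span of `{((U 0 0)†)^n ψ : n ∈ ℕ}` is a non-unitary isometry: it maps `M` into `M`
isometrically, but not onto `M`. -/
theorem embezzlement_gives_nonunitary_isometry
    {H : Type*} [NormedAddCommGroup H] [InnerProductSpace ℂ H] [CompleteSpace H]
    (ψ : H) (hψ : ‖ψ‖ = 1) (U V : Fin 2 → Fin 2 → (H →L[ℂ] H))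
    (hU : IsUnitaryOpMatrix U) (hV : IsUnitaryOpMatrix V)
    (hUV : StarCommuteFamilies U V)
    (he1 : U 0 0 (V 0 0 ψ) = (1 / Real.sqrt 2 : ℂ) • ψ)
    (he2 : U 1 0 (V 1 0 ψ) = (1 / Real.sqrt 2 : ℂ) • ψ)
    (he3 : U 0 0 (V 1 0 ψ) = 0)
    (he4 : U 1 0 (V 0 0 ψ) = 0) :
    (∀ m ∈ (Submodule.span ℂ
        (Set.range fun n : ℕ => ((adjoint (U 0 0)) ^ n) ψ)).topologicalClosure,
      adjoint (U 0 0) m ∈ (Submodule.span ℂ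
        (Set.range fun n : ℕ => ((adjoint (U 0 0)) ^ n) ψ)).topologicalClosure) ∧
    (∀ m ∈ (Submodule.span ℂ
        (Set.range fun n : ℕ => ((adjoint (U 0 0)) ^ n) ψ)).topologicalClosure,
      ‖adjoint (U 0 0) m‖ = ‖m‖) ∧
    ¬ (∀ y ∈ (Submodule.span ℂ
        (Set.range fun n : ℕ => ((adjoint (U 0 0)) ^ n) ψ)).topologicalClosure,
      ∃ m ∈ (Submodule.span ℂ
        (Set.range fun n : ℕ => ((adjoint (U 0 0)) ^ n) ψ)).topologicalClosure,
      adjoint (U 0 0) m = y) := by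
  classical
  set A := U 0 0 with hA
  set B := U 1 0 with hB
  set W := V 0 0 with hW
  set T := adjoint A with hT
  set s : ℂ := (Real.sqrt 2 : ℂ) with hs
  have hs0 : s ≠ 0 := by
    simp only [hs, Complex.ofReal_ne_zero]
    positivity
  have hsinv : (1 / Real.sqrt 2 : ℂ) = s⁻¹ := by
    rw [hs]; push_cast; ring
  -- column relation
  have hcol : T ∘L A + adjoint B ∘L B = 1 := by
    have := hU.1 0 0
    simpa [Fin.sum_univ_two] using this
  have hcolx : ∀ x : H, T (A x) + adjoint B (B x) = x := by
    intro x
    have := ContinuousLinearMap.ext_iff.mp hcol x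
    simpa using this
  -- commutation facts
  have hAW : ∀ x, A (W x) = W (A x) := fun x => by
    have := ContinuousLinearMap.ext_iff.mp (hUV 0 0 0 0).1 x; simpa using this
  have hTW : ∀ x, T (W x) = W (T x) := fun x => by
    have := ContinuousLinearMap.ext_iff.mp (hUV 0 0 0 0).2 x; simpa using this
  have hBV10 : ∀ x, B (V 1 0 x) = V 1 0 (B x) := fun x => by
    have := ContinuousLinearMap.ext_iff.mp (hUV 1 0 1 0).1 x; simpa using this
  -- the generators
  set x : ℕ → H := fun n => ((T : H →L[ℂ] H) ^ n) ψ with hx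
  have hx0 : x 0 = ψ := by simp [hx]
  have hxsucc : ∀ n, x (n + 1) = T (x n) := by
    intro n
    show ((T : H →L[ℂ] H) ^ (n + 1)) ψ = T (((T : H →L[ℂ] H) ^ n) ψ)
    rw [pow_succ', ContinuousLinearMap.mul_apply]
  -- T ψ = s • W ψ
  have hR0 : T ψ = s • W ψ := by
    have h1 := hcolx (W ψ)
    rw [he1, he4, map_zero, add_zero, map_smul, one_div] at h1
    rw [← h1, smul_inv_smul₀ hs0]
  have hR : ∀ n, T (x n) = s • W (x n) := by
    intro n
    induction n with
    | zero => rw [hx0]; exact hR0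
    | succ n ih =>
        rw [hxsucc n, ih, map_smul, hTW, ih, map_smul]
  have hS : ∀ n, A (W (x n)) = s⁻¹ • x n := by
    intro n
    induction n with
    | zero =>
        rw [hx0, he1, one_div]
    | succ n ih =>
        rw [hxsucc n, hR n, map_smul, map_smul, hAW, ih, map_smul]
        exact smul_comm _ _ _
  -- A T = 1 on generators
  have hP : ∀ n, A (T (x n)) = x n := by
    intro n
    rw [hR n, map_smul, hS n, smul_smul, mul_inv_cancel₀ hs0, one_smul]
  -- the closed subspace M
  set M := (Submodule.span ℂ
      (Set.range fun n : ℕ => ((adjoint (U 0 0)) ^ n) ψ)).topologicalClosure with hM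
  have hgen : ∀ n, x n ∈ M := by
    intro n
    exact Submodule.le_topologicalClosure _ (Submodule.subset_span ⟨n, rfl⟩)
  -- A ∘ T = id on M
  have hAT : ∀ m ∈ M, A (T m) = m := by
    intro m hm
    set D : H →L[ℂ] H := A ∘L T - 1 with hD
    have hker : M ≤ LinearMap.ker (D : H →ₗ[ℂ] H) := by
      apply Submodule.topologicalClosure_minimal
      · rw [Submodule.span_le]
        rintro _ ⟨n, rfl⟩
        simp only [SetLike.mem_coe, LinearMap.mem_ker, hD, ContinuousLinearMap.coe_coe, sub_apply, comp_apply, one_apply]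
        rw [sub_eq_zero]
        exact hP n
      · exact ContinuousLinearMap.isClosed_ker D
    have := hker hm
    simp only [LinearMap.mem_ker, hD, ContinuousLinearMap.coe_coe, sub_apply, comp_apply, one_apply, sub_eq_zero] at this
    exact this
  -- part 1 : T maps M into M
  have part1 : ∀ m ∈ M, T m ∈ M := by
    intro m hm
    have hle : M ≤ Submodule.comap (T : H →ₗ[ℂ] H) M := by
      apply Submodule.topologicalClosure_minimal
      · rw [Submodule.span_le]
        rintro _ ⟨n, rfl⟩
        simp only [SetLike.mem_coe, Submodule.mem_comap, ContinuousLinearMap.coe_coe]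
        have : T (x n) = x (n + 1) := (hxsucc n).symm
        rw [this]
        exact hgen (n + 1)
      · have : (Submodule.comap (T : H →ₗ[ℂ] H) M : Set H) = T ⁻¹' M := rfl
        rw [this]
        exact (Submodule.isClosed_topologicalClosure _).preimage T.continuous
    exact hle hm
  -- part 2 : isometry on M
  have part2 : ∀ m ∈ M, ‖T m‖ = ‖m‖ := by
    intro m hm
    have h1 : ⟪T m, T m⟫_ℂ = ⟪m, m⟫_ℂ := by
      rw [hT, ContinuousLinearMap.adjoint_inner_left]
      rw [← hT, hAT m hm]
    have h2 : ‖T m‖ ^ 2 = ‖m‖ ^ 2 := by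
      rw [inner_self_eq_norm_sq_to_K, inner_self_eq_norm_sq_to_K] at h1
      exact_mod_cast h1
    rw [← Real.sqrt_sq (norm_nonneg (T m)), ← Real.sqrt_sq (norm_nonneg m), h2]
  refine ⟨part1, part2, ?_⟩
  intro hsurj
  have hψM : ψ ∈ M := by rw [← hx0]; exact hgen 0
  obtain ⟨m, hmM, hmψ⟩ := hsurj ψ hψM
  have hmAψ : m = A ψ := by rw [← hmψ, hAT m hmM]
  have hnm : ‖A ψ‖ = 1 := by
    rw [← hmAψ]
    have := part2 m hmM
    rw [hmψ, hψ] at this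
    exact this.symm
  -- norm identity from column relation
  have hBψ : B ψ = 0 := by
    have h1 := hcolx ψ
    have h2 : ⟪T (A ψ) + adjoint B (B ψ), ψ⟫_ℂ = ⟪ψ, ψ⟫_ℂ := by rw [h1]
    rw [inner_add_left, hT, ContinuousLinearMap.adjoint_inner_left,
      ContinuousLinearMap.adjoint_inner_left] at h2
    rw [inner_self_eq_norm_sq_to_K, inner_self_eq_norm_sq_to_K,
      inner_self_eq_norm_sq_to_K] at h2
    have h3 : ‖A ψ‖ ^ 2 + ‖B ψ‖ ^ 2 = ‖ψ‖ ^ 2 := by exact_mod_cast h2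
    rw [hnm, hψ] at h3
    have : ‖B ψ‖ = 0 := by nlinarith [norm_nonneg (B ψ)]
    exact norm_eq_zero.mp this
  have : V 1 0 (B ψ) = (1 / Real.sqrt 2 : ℂ) • ψ := by
    rw [← hBV10]; exact he2
  rw [hBψ, map_zero] at this
  have hψ0 : ψ ≠ 0 := by intro h; rw [h, norm_zero] at hψ; norm_num at hψ
  exact hψ0 ((smul_eq_zero_iff_right (by rw [hsinv]; exact inv_ne_zero hs0)).mp this.symm)
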